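/- (Ultramodular implies QIVPM) Let (ℓ, r) be an ultramodular interval-valued map on [0,1] and let μ be a quantum probability measure on ℂ^d. Then the pair L P = ℓ (μ P), R P = r (μ P) is a QIVPM on ℂ^d. -/
import Mathlib


open Matrix
open scoped ComplexOrder

/-- A projector on `ℂ^d`: an idempotent, self-adjoint matrix. -/
def IsProjector {d : ℕ} (P : Matrix (Fin d) (Fin d) ℂ) : Prop :=
  P * P = P ∧ Pᴴ = P

/-- A quantum interval-valued probability measure (QIVPM) on `ℂ^d`,
given by the pair of interval-endpoint functions `L ≤ R`. -/
def IsQIVPM {d : ℕ} (L R : Matrix (Fin d) (Fin d) ℂ → ℝ) : Prop :=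
  (∀ P, IsProjector P → 0 ≤ L P ∧ L P ≤ R P ∧ R P ≤ 1) ∧
  (L 0 = 0 ∧ R 0 = 0) ∧
  (L 1 = 1 ∧ R 1 = 1) ∧
  (∀ P, IsProjector P → L (1 - P) = 1 - R P ∧ R (1 - P) = 1 - L P) ∧
  (∀ P₀ P₁, IsProjector P₀ → IsProjector P₁ → P₀ * P₁ = P₁ * P₀ →
    L P₀ + L P₁ ≤ L (P₀ + P₁ - P₀ * P₁) + L (P₀ * P₁) ∧
    R (P₀ + P₁ - P₀ * P₁) + R (P₀ * P₁) ≤ R P₀ + R P₁)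

/-- A QIVPM is `δ`-deterministic if every projector's interval lies in `[0,δ]` or `[1-δ,1]`. -/
def IsDeltaDet {d : ℕ} (δ : ℝ) (L R : Matrix (Fin d) (Fin d) ℂ → ℝ) : Prop :=
  ∀ P, IsProjector P → R P ≤ δ ∨ 1 - δ ≤ L P

/-- A QIVPM is `0`-deterministic if every projector is assigned `[0,0]` or `[1,1]`. -/
def IsZeroDet {d : ℕ} (L R : Matrix (Fin d) (Fin d) ℂ → ℝ) : Prop :=
  ∀ P, IsProjector P → (L P = 0 ∧ R P = 0) ∨ (L P = 1 ∧ R P = 1)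

/-- A state (density matrix) on `ℂ^d`. -/
def IsState {d : ℕ} (ρ : Matrix (Fin d) (Fin d) ℂ) : Prop :=
  ρ.PosSemidef ∧ ρ.trace = 1

/-- An interval-valued map on `[0,1]`. -/
def IsIntervalValuedMap (l r : ℝ → ℝ) : Prop :=
  ∀ x ∈ Set.Icc (0:ℝ) 1, 0 ≤ l x ∧ l x ≤ r x ∧ r x ≤ 1

/-- An ultramodular interval-valued map on `[0,1]`. -/
def IsUltramodular (l r : ℝ → ℝ) : Prop :=
  IsIntervalValuedMap l r ∧
  (l 0 = 0 ∧ r 0 = 0) ∧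
  (l 1 = 1 ∧ r 1 = 1) ∧
  (∀ x ∈ Set.Icc (0:ℝ) 1, l (1 - x) = 1 - r x ∧ r (1 - x) = 1 - l x) ∧
  (∀ x₀ x₁ x₂ : ℝ, 0 ≤ x₀ → 0 ≤ x₁ → 0 ≤ x₂ → x₀ + x₁ + x₂ ≤ 1 →
    l (x₀ + x₂) + l (x₁ + x₂) ≤ l (x₀ + x₁ + x₂) + l x₂ ∧
    r (x₀ + x₁ + x₂) + r x₂ ≤ r (x₀ + x₂) + r (x₁ + x₂))

/-- A (sharp) quantum probability measure on `ℂ^d`. -/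
def IsQPM {d : ℕ} (μ : Matrix (Fin d) (Fin d) ℂ → ℝ) : Prop :=
  (∀ P, IsProjector P → 0 ≤ μ P ∧ μ P ≤ 1) ∧
  μ 0 = 0 ∧ μ 1 = 1 ∧
  (∀ P, IsProjector P → μ (1 - P) = 1 - μ P) ∧
  (∀ P₀ P₁, IsProjector P₀ → IsProjector P₁ → P₀ * P₁ = 0 → μ (P₀ + P₁) = μ P₀ + μ P₁)

lemma orth_sum_proj {d : ℕ} {P Q : Matrix (Fin d) (Fin d) ℂ}
    (hP : IsProjector P) (hQ : IsProjector Q) (h : P * Q = 0) :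
    IsProjector (P + Q) := by
  have hQP : Q * P = 0 := by
    have := congrArg conjTranspose h
    rwa [conjTranspose_mul, hP.2, hQ.2, conjTranspose_zero] at this
  constructor
  · rw [add_mul, mul_add, mul_add, hP.1, hQ.1, h, hQP]
    abel
  · rw [conjTranspose_add, hP.2, hQ.2]

/-- Composing an ultramodular interval-valued map with a quantum probability
measure yields a QIVPM. -/
theorem ultramodular_comp_QPM_is_QIVPM {d : ℕ} (l r : ℝ → ℝ)
    (hu : IsUltramodular l r)
    (μ : Matrix (Fin d) (Fin d) ℂ → ℝ) (hμ : IsQPM μ) :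
    IsQIVPM (fun P => l (μ P)) (fun P => r (μ P)) := by
  obtain ⟨hiv, ⟨hl0, hr0⟩, ⟨hl1, hr1⟩, hcompl, hultra⟩ := hu
  obtain ⟨hμ01, hμ0, hμ1, hμc, hμadd⟩ := hμ
  have hIcc : ∀ P : Matrix (Fin d) (Fin d) ℂ, IsProjector P → μ P ∈ Set.Icc (0:ℝ) 1 :=
    fun P hP => ⟨(hμ01 P hP).1, (hμ01 P hP).2⟩
  refine ⟨?_, ?_, ?_, ?_, ?_⟩
  · intro P hP; exact hiv _ (hIcc P hP)
  · simp only [hμ0, hl0, hr0]; exact ⟨trivial, trivial⟩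
  · simp only [hμ1, hl1, hr1]; exact ⟨trivial, trivial⟩
  · intro P hP
    simp only [hμc P hP]
    exact hcompl _ (hIcc P hP)
  · intro A B hA hB hcomm
    have hAAB : A * (A * B) = A * B := by rw [← mul_assoc, hA.1]
    have hABB : (A * B) * B = A * B := by rw [mul_assoc, hB.1]
    have hABA : (A * B) * A = A * B := by rw [hcomm, mul_assoc, hA.1, ← hcomm]
    have hBAB : B * (A * B) = A * B := by
      rw [hcomm, ← mul_assoc, hB.1, ← hcomm]
    have hABAB : (A * B) * (A * B) = A * B := by rw [← mul_assoc, hABA, hABB]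
    have hAB : IsProjector (A * B) := by
      refine ⟨hABAB, ?_⟩
      rw [conjTranspose_mul, hA.2, hB.2, ← hcomm]
    have hA' : IsProjector (A - A * B) := by
      constructor
      · rw [sub_mul, mul_sub, mul_sub, hA.1, hAAB, hABA, hABAB]
        abel
      · rw [conjTranspose_sub, hA.2, hAB.2]
    have hB' : IsProjector (B - A * B) := by
      constructor
      · rw [sub_mul, mul_sub, mul_sub, hB.1, hBAB, hABB, hABAB]
        abel
      · rw [conjTranspose_sub, hB.2, hAB.2]
    have o1 : (A - A * B) * (A * B) = 0 := by
      rw [sub_mul, hAAB, hABAB, sub_self]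
    have o2 : (B - A * B) * (A * B) = 0 := by
      rw [sub_mul, hBAB, hABAB, sub_self]
    have o3 : (A - A * B) * (B - A * B) = 0 := by
      rw [sub_mul, mul_sub, mul_sub, hAAB, hABB, hABAB]
      abel
    have hS : IsProjector ((A - A * B) + (B - A * B)) := orth_sum_proj hA' hB' o3
    have o4 : ((A - A * B) + (B - A * B)) * (A * B) = 0 := by
      rw [add_mul, o1, o2, add_zero]
    have hT : IsProjector ((A - A * B) + (B - A * B) + A * B) := orth_sum_proj hS hAB o4
    have eA : μ A = μ (A - A * B) + μ (A * B) := by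
      have h := hμadd _ _ hA' hAB o1
      rwa [sub_add_cancel] at h
    have eB : μ B = μ (B - A * B) + μ (A * B) := by
      have h := hμadd _ _ hB' hAB o2
      rwa [sub_add_cancel] at h
    have eS : μ ((A - A * B) + (B - A * B)) = μ (A - A * B) + μ (B - A * B) :=
      hμadd _ _ hA' hB' o3
    have eT : μ (A + B - A * B) = μ (A - A * B) + μ (B - A * B) + μ (A * B) := by
      have h := hμadd _ _ hS hAB o4
      rw [eS] at h
      have harr : (A - A * B) + (B - A * B) + A * B = A + B - A * B := by abel
      rw [harr] at h
      exact h
    have hT' : IsProjector (A + B - A * B) := by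
      have harr : (A - A * B) + (B - A * B) + A * B = A + B - A * B := by abel
      rwa [harr] at hT
    have hx0 := (hμ01 _ hA').1
    have hx1 := (hμ01 _ hB').1
    have hx2 := (hμ01 _ hAB).1
    have hsum : μ (A - A * B) + μ (B - A * B) + μ (A * B) ≤ 1 := by
      rw [← eT]; exact (hμ01 _ hT').2
    have key := hultra _ _ _ hx0 hx1 hx2 hsum
    simp only [eA, eB, eT]
    exact key
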